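/- If (γ*, p*) solves the max-min problem so that p* = γ*(Z* p* + σ*) with p* > 0, max_n p*_n = pmax, and for every admissible (Z, σ) one has Z* p* + σ* ≤ Z p* + σ componentwise (Z*, σ* achieve the minimum interference at p*), then with k' an index attaining p*_{k'} = pmax and Z'_j := Z + pmax^{-1} σ e_jᵀ, one has Z'_{k'}(Z*,σ*) p* = (1/γ*) p* and 1/γ* = ρ(Z'_{k'}(Z*, σ*)) ≤ ρ(Z'_{k'}(Z, σ)) for all admissible (Z, σ). -/

import Mathlib

open Matrix
open scoped ENNReal NNReal

/-- The spectral radius of a real square matrix: the supremum of the moduli of its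
complex eigenvalues. -/
noncomputable def specRad {N : ℕ} (A : Matrix (Fin N) (Fin N) ℝ) : ℝ :=
  sSup {r : ℝ | ∃ μ : ℂ, μ ∈ spectrum ℂ (A.map (fun x : ℝ => (x : ℂ))) ∧ r = ‖μ‖}


namespace SpecRadAux

attribute [local instance] Matrix.linftyOpNormedAddCommGroup Matrix.linftyOpNormedRing
  Matrix.linftyOpNormedAlgebra Matrix.linftyOpNormedSpace

variable {N : ℕ}

lemma mem_spectrum_of_eig {M : Matrix (Fin N) (Fin N) ℂ} {μ : ℂ} {v : Fin N → ℂ}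
    (hv0 : v ≠ 0) (h : M *ᵥ v = μ • v) : μ ∈ spectrum ℂ M := by
  rw [← AlgEquiv.spectrum_eq (Matrix.toLinAlgEquiv' (R := ℂ) (n := Fin N)) M,
    ← Module.End.hasEigenvalue_iff_mem_spectrum]
  exact Module.End.hasEigenvalue_of_hasEigenvector
    ⟨Module.End.mem_eigenspace_iff.mpr (by simpa [Matrix.toLinAlgEquiv'_apply] using h), hv0⟩

lemma eig_of_mem_spectrum {M : Matrix (Fin N) (Fin N) ℂ} {μ : ℂ}
    (h : μ ∈ spectrum ℂ M) : ∃ v : Fin N → ℂ, v ≠ 0 ∧ M *ᵥ v = μ • v := by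
  rw [← AlgEquiv.spectrum_eq (Matrix.toLinAlgEquiv' (R := ℂ) (n := Fin N)) M,
    ← Module.End.hasEigenvalue_iff_mem_spectrum] at h
  obtain ⟨v, hv⟩ := h.exists_hasEigenvector
  exact ⟨v, hv.2, by simpa [Matrix.toLinAlgEquiv'_apply] using hv.apply_eq_smul⟩

lemma bddAbove_S (A : Matrix (Fin N) (Fin N) ℝ) :
    BddAbove {r : ℝ | ∃ μ : ℂ,
      μ ∈ spectrum ℂ (A.map (fun x : ℝ => (x : ℂ))) ∧ r = ‖μ‖} := by
  refine ⟨‖A.map (fun x : ℝ => (x : ℂ))‖ * ‖(1 : Matrix (Fin N) (Fin N) ℂ)‖, ?_⟩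
  rintro r ⟨μ, hμ, rfl⟩
  have := spectrum.norm_le_norm_mul_of_mem hμ
  exact this


lemma abs_le_of_subinvariant [Nonempty (Fin N)] {A : Matrix (Fin N) (Fin N) ℝ}
    {y : Fin N → ℝ} {l : ℝ} (hA : ∀ i j, 0 ≤ A i j) (hy : ∀ i, 0 < y i)
    (h : ∀ i, (A *ᵥ y) i ≤ l * y i) {μ : ℂ}
    (hμ : μ ∈ spectrum ℂ (A.map (fun x : ℝ => (x : ℂ)))) : ‖μ‖ ≤ l := by
  obtain ⟨v, hv0, hv⟩ := eig_of_mem_spectrum hμ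
  obtain ⟨i, -, hi⟩ := Finset.exists_max_image Finset.univ
    (fun j => ‖v j‖ / y j) ⟨Classical.arbitrary _, Finset.mem_univ _⟩
  set c : ℝ := ‖v i‖ / y i with hc
  have hc0 : 0 ≤ c := div_nonneg (norm_nonneg _) (hy i).le
  have hcy : ∀ j, ‖v j‖ ≤ c * y j := by
    intro j
    have := hi j (Finset.mem_univ j)
    calc ‖v j‖ = ‖v j‖ / y j * y j := by
          rw [div_mul_cancel₀ _ (hy j).ne']
      _ ≤ c * y j := by
          exact mul_le_mul_of_nonneg_right this (hy j).le
  have hvi : ‖v i‖ = c * y i := by rw [hc, div_mul_cancel₀ _ (hy i).ne']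
  have hvip : 0 < ‖v i‖ := by
    rcases (norm_nonneg (v i)).lt_or_eq with h' | h'
    · exact h'
    · exfalso
      apply hv0
      funext j
      have hcz : c = 0 := by rw [hc, ← h']; simp
      have := hcy j
      rw [hcz, zero_mul] at this
      simpa using le_antisymm this (norm_nonneg _)
  have hmve : ∀ i, (A.map (fun x : ℝ => (x : ℂ)) *ᵥ v) i = ∑ j, (A i j : ℂ) * v j := by
    intro i; simp [Matrix.mulVec, dotProduct, Matrix.map_apply]
  have key : ‖μ‖ * ‖v i‖ ≤ l * ‖v i‖ := by
    calc ‖μ‖ * ‖v i‖ = ‖μ * v i‖ := (norm_mul _ _).symm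
      _ = ‖(A.map (fun x : ℝ => (x : ℂ)) *ᵥ v) i‖ := by
          rw [hv]; simp
      _ = ‖∑ j, (A i j : ℂ) * v j‖ := by rw [hmve]
      _ ≤ ∑ j, ‖(A i j : ℂ) * v j‖ := norm_sum_le _ _
      _ = ∑ j, A i j * ‖v j‖ := by
          refine Finset.sum_congr rfl fun j _ => ?_
          rw [norm_mul, Complex.norm_real, Real.norm_eq_abs, abs_of_nonneg (hA i j)]
      _ ≤ ∑ j, A i j * (c * y j) := Finset.sum_le_sum fun j _ =>
          mul_le_mul_of_nonneg_left (hcy j) (hA i j)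
      _ = c * (A *ᵥ y) i := by
          simp only [Matrix.mulVec, dotProduct, Finset.mul_sum]
          exact Finset.sum_congr rfl fun j _ => by ring
      _ ≤ c * (l * y i) := mul_le_mul_of_nonneg_left (h i) hc0
      _ = l * (c * y i) := by ring
      _ = l * ‖v i‖ := by rw [hvi]
  exact le_of_mul_le_mul_right key hvip


lemma le_specRad_of_superinvariant [Nonempty (Fin N)] {A : Matrix (Fin N) (Fin N) ℝ}
    {y : Fin N → ℝ} {μ : ℝ} (hA : ∀ i j, 0 ≤ A i j) (hy : ∀ i, 0 < y i) (hμ : 0 < μ)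
    (h : ∀ i, μ * y i ≤ (A *ᵥ y) i) : μ ≤ specRad A := by
  classical
  haveI : CompleteSpace (Matrix (Fin N) (Fin N) ℂ) := FiniteDimensional.complete ℂ _
  set M := A.map (fun x : ℝ => (x : ℂ)) with hM
  have hiter : ∀ n : ℕ, ∀ i, μ ^ n * y i ≤ ((A ^ n) *ᵥ y) i := by
    intro n
    induction n with
    | zero => intro i; simp [Matrix.one_mulVec]
    | succ n ih =>
      intro i
      have h1 : (A ^ (n + 1)) *ᵥ y = A *ᵥ ((A ^ n) *ᵥ y) := by
        rw [Matrix.mulVec_mulVec, ← pow_succ']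
      rw [h1]
      calc μ ^ (n + 1) * y i = μ ^ n * (μ * y i) := by ring
        _ ≤ μ ^ n * (A *ᵥ y) i := mul_le_mul_of_nonneg_left (h i) (pow_nonneg hμ.le n)
        _ = ∑ j, A i j * (μ ^ n * y j) := by
            simp only [Matrix.mulVec, dotProduct, Finset.mul_sum]
            exact Finset.sum_congr rfl fun j _ => by ring
        _ ≤ ∑ j, A i j * ((A ^ n) *ᵥ y) j := Finset.sum_le_sum fun j _ =>
            mul_le_mul_of_nonneg_left (ih j) (hA i j)
        _ = (A *ᵥ ((A ^ n) *ᵥ y)) i := by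
            simp [Matrix.mulVec, dotProduct]
  have hMpow : ∀ n : ℕ, M ^ n = ((A ^ n).map (fun x : ℝ => (x : ℂ))) := by
    intro n
    have hM' : M = (algebraMap ℝ ℂ).mapMatrix A := by
      ext i j; simp [hM, RingHom.mapMatrix_apply, Matrix.map_apply, Complex.coe_algebraMap]
    have h2 : (algebraMap ℝ ℂ).mapMatrix (A ^ n) = ((algebraMap ℝ ℂ).mapMatrix A) ^ n :=
      map_pow _ _ _
    rw [hM', ← h2]; ext i j
    simp [RingHom.mapMatrix_apply, Matrix.map_apply, Complex.coe_algebraMap]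
  set yC : Fin N → ℂ := fun j => (y j : ℂ) with hyC
  have hmv : ∀ (B : Matrix (Fin N) (Fin N) ℝ) (i : Fin N),
      ((B.map (fun x : ℝ => (x : ℂ))) *ᵥ yC) i = ((B *ᵥ y) i : ℂ) := by
    intro B i
    simp only [Matrix.mulVec, dotProduct, Matrix.map_apply, hyC]
    norm_cast
  obtain ⟨i0, -, hi0⟩ := Finset.exists_max_image Finset.univ y
    ⟨Classical.arbitrary _, Finset.mem_univ _⟩
  have hyCn : ‖yC‖ ≤ y i0 := by
    refine (pi_norm_le_iff_of_nonneg (hy i0).le).mpr fun j => ?_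
    rw [hyC]
    simp only [Complex.norm_real, Real.norm_eq_abs, abs_of_nonneg (hy j).le]
    exact hi0 j (Finset.mem_univ j)
  have key : ∀ n : ℕ, μ ^ n ≤ ‖M ^ n‖ := by
    intro n
    have h1 : μ ^ n * y i0 ≤ ((A ^ n) *ᵥ y) i0 := hiter n i0
    have h2 : ((A ^ n) *ᵥ y) i0 ≤ ‖M ^ n‖ * y i0 := by
      calc ((A ^ n) *ᵥ y) i0 ≤ ‖((M ^ n) *ᵥ yC) i0‖ := by
            rw [hMpow n, hmv, Complex.norm_real, Real.norm_eq_abs]; exact le_abs_self _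
        _ ≤ ‖(M ^ n) *ᵥ yC‖ := by
            exact norm_le_pi_norm _ i0
        _ ≤ ‖M ^ n‖ * ‖yC‖ := Matrix.linfty_opNorm_mulVec _ _
        _ ≤ ‖M ^ n‖ * y i0 := mul_le_mul_of_nonneg_left hyCn (norm_nonneg _)
    exact le_of_mul_le_mul_right (h1.trans h2) (hy i0)
  have hterm : ∀ n : ℕ, 1 ≤ n → (μ.toNNReal : ℝ≥0∞) ≤ (‖M ^ n‖₊ : ℝ≥0∞) ^ (1 / (n : ℝ)) := by
    intro n hn
    have hn0 : (n : ℝ) ≠ 0 := Nat.cast_ne_zero.mpr (by omega)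
    have hnn : (μ.toNNReal : ℝ≥0∞) ^ (n : ℕ) ≤ (‖M ^ n‖₊ : ℝ≥0∞) := by
      rw [← ENNReal.coe_pow, ENNReal.coe_le_coe, ← NNReal.coe_le_coe]
      push_cast
      rw [Real.coe_toNNReal _ hμ.le]
      exact key n
    calc (μ.toNNReal : ℝ≥0∞) = ((μ.toNNReal : ℝ≥0∞) ^ (n : ℕ)) ^ (1 / (n : ℝ)) := by
          rw [← ENNReal.rpow_natCast, ← ENNReal.rpow_mul, mul_one_div_cancel hn0,
            ENNReal.rpow_one]
      _ ≤ _ := ENNReal.rpow_le_rpow hnn (by positivity)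
  have hsr : (μ.toNNReal : ℝ≥0∞) ≤ spectralRadius ℂ M :=
    ge_of_tendsto (spectrum.pow_nnnorm_pow_one_div_tendsto_nhds_spectralRadius M)
      (Filter.eventually_atTop.mpr ⟨1, hterm⟩)
  unfold specRad
  refine le_of_forall_lt fun r hr => ?_
  have hr' : max r 0 < μ := max_lt hr hμ
  have hlt : ((max r 0).toNNReal : ℝ≥0∞) < spectralRadius ℂ M :=
    lt_of_lt_of_le (ENNReal.coe_lt_coe.mpr
      ((Real.toNNReal_lt_toNNReal_iff hμ).mpr hr')) hsr
  unfold spectralRadius at hlt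
  rw [lt_iSup_iff] at hlt
  obtain ⟨k, hlt⟩ := hlt
  rw [lt_iSup_iff] at hlt
  obtain ⟨hk, hlt⟩ := hlt
  have hk2 : max r 0 < ‖k‖ := by
    have h3 := ENNReal.coe_lt_coe.mp hlt
    have h4 : ((max r 0).toNNReal : ℝ) < (‖k‖₊ : ℝ) := NNReal.coe_lt_coe.mpr h3
    rwa [Real.coe_toNNReal _ (le_max_right r 0), coe_nnnorm] at h4
  exact lt_of_le_of_lt (le_max_left r 0)
    (lt_of_lt_of_le hk2 (le_csSup (bddAbove_S A) ⟨k, hk, rfl⟩))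

end SpecRadAux

/-- If `(γ*, p*)` satisfies `p* = γ*(Z* p* + σ*)` with `p* > 0`,
`max_n p*_n = pmax` attained at `k'`, and `(Z*, σ*)` minimizes the interference
`Z p* + σ` componentwise over a finite admissible family, then with
`Z'_j(Z,σ) := Z + pmax⁻¹ σ e_jᵀ` we have `Z'_{k'}(Z*,σ*) p* = (1/γ*) p*` and
`1/γ* = ρ(Z'_{k'}(Z*,σ*)) ≤ ρ(Z'_{k'}(Z,σ))` for every admissible `(Z,σ)`. -/
theorem stmt_13 {N : ℕ} {ι : Type} [Fintype ι] [Nonempty ι]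
    (Z : ι → Matrix (Fin N) (Fin N) ℝ) (σ : ι → (Fin N → ℝ))
    (hZ : ∀ d i j, 0 ≤ Z d i j) (hσ : ∀ d i, 0 < σ d i)
    (pmax : ℝ) (hpmax : 0 < pmax) (γs : ℝ) (hγs : 0 < γs)
    (ps : Fin N → ℝ) (hps : ∀ i, 0 < ps i) (hle : ∀ n, ps n ≤ pmax)
    (k' : Fin N) (hk' : ps k' = pmax)
    (ds : ι) (hfix : ps = γs • (Z ds *ᵥ ps + σ ds))
    (hmin : ∀ d : ι, ∀ n, (Z ds *ᵥ ps + σ ds) n ≤ (Z d *ᵥ ps + σ d) n) :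
    (Z ds + pmax⁻¹ • vecMulVec (σ ds) (Pi.single k' 1)) *ᵥ ps = γs⁻¹ • ps ∧
    γs⁻¹ = specRad (Z ds + pmax⁻¹ • vecMulVec (σ ds) (Pi.single k' 1)) ∧
    (∀ d : ι, specRad (Z ds + pmax⁻¹ • vecMulVec (σ ds) (Pi.single k' 1)) ≤
      specRad (Z d + pmax⁻¹ • vecMulVec (σ d) (Pi.single k' 1))) := by
  classical
  haveI : Nonempty (Fin N) := ⟨k'⟩
  set B : ι → Matrix (Fin N) (Fin N) ℝ :=
    fun d => Z d + pmax⁻¹ • vecMulVec (σ d) (Pi.single k' 1) with hB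
  have hBv : ∀ d, B d *ᵥ ps = Z d *ᵥ ps + σ d := by
    intro d
    funext i
    have h1 : (vecMulVec (σ d) (Pi.single k' 1) *ᵥ ps) i = σ d i * pmax := by
      simp only [Matrix.mulVec, dotProduct, Matrix.vecMulVec_apply]
      rw [Finset.sum_eq_single k']
      · rw [Pi.single_eq_same, mul_one, hk']
      · intro b _ hb; rw [Pi.single_eq_of_ne hb, mul_zero, zero_mul]
      · intro hb; exact absurd (Finset.mem_univ k') hb
    simp only [hB, Matrix.add_mulVec, Matrix.smul_mulVec, Pi.add_apply, Pi.smul_apply,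
      smul_eq_mul, h1]
    rw [mul_comm (σ d i) pmax, ← mul_assoc, inv_mul_cancel₀ hpmax.ne', one_mul]
  have hfix' : γs⁻¹ • ps = Z ds *ᵥ ps + σ ds := by
    nth_rewrite 1 [hfix]
    rw [smul_smul, inv_mul_cancel₀ hγs.ne', one_smul]
  have goal1 : B ds *ᵥ ps = γs⁻¹ • ps := by rw [hBv ds, ← hfix']
  have hBnn : ∀ d i j, 0 ≤ B d i j := by
    intro d i j
    have hs : 0 ≤ (Pi.single k' 1 : Fin N → ℝ) j := by
      rcases eq_or_ne j k' with h | h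
      · subst h; simp
      · simp [Pi.single_eq_of_ne h]
    have h2 : B d i j = Z d i j + pmax⁻¹ * (σ d i * (Pi.single k' 1 : Fin N → ℝ) j) := by
      simp [hB, Matrix.add_apply, Matrix.vecMulVec_apply]
    rw [h2]
    exact add_nonneg (hZ d i j)
      (mul_nonneg (inv_nonneg.mpr hpmax.le) (mul_nonneg (hσ d i).le hs))
  have hps0 : (fun j => (ps j : ℂ)) ≠ 0 := by
    intro h0
    have h1 := congrFun h0 k'
    simp only [Pi.zero_apply, Complex.ofReal_eq_zero] at h1
    exact (hps k').ne' h1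
  have hmem : γs⁻¹ ∈ {r : ℝ | ∃ μ : ℂ,
      μ ∈ spectrum ℂ ((B ds).map (fun x : ℝ => (x : ℂ))) ∧ r = ‖μ‖} := by
    refine ⟨((γs⁻¹ : ℝ) : ℂ), ?_, ?_⟩
    · apply SpecRadAux.mem_spectrum_of_eig hps0
      funext i
      have h2 : (((B ds).map (fun x : ℝ => (x : ℂ))) *ᵥ (fun j => (ps j : ℂ))) i
          = (((B ds *ᵥ ps) i : ℝ) : ℂ) := by
        simp only [Matrix.mulVec, dotProduct, Matrix.map_apply]
        norm_cast
      rw [h2, goal1]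
      simp only [Pi.smul_apply, smul_eq_mul, Complex.ofReal_mul]
    · rw [Complex.norm_real, Real.norm_eq_abs, abs_of_nonneg (inv_nonneg.mpr hγs.le)]
  have goal2 : specRad (B ds) = γs⁻¹ := by
    unfold specRad
    refine le_antisymm (csSup_le ⟨_, hmem⟩ ?_) (le_csSup (SpecRadAux.bddAbove_S _) hmem)
    rintro r ⟨μ, hμ, rfl⟩
    refine SpecRadAux.abs_le_of_subinvariant (hBnn ds) hps (fun i => ?_) hμ
    rw [goal1]
    exact le_rfl
  refine ⟨goal1, goal2.symm, fun d => ?_⟩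
  rw [goal2]
  refine SpecRadAux.le_specRad_of_superinvariant (hBnn d) hps (inv_pos.mpr hγs) fun i => ?_
  rw [hBv d]
  calc γs⁻¹ * ps i = (γs⁻¹ • ps) i := by simp
    _ = (Z ds *ᵥ ps + σ ds) i := by rw [hfix']
    _ ≤ (Z d *ᵥ ps + σ d) i := hmin d i
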